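/- arXiv:1312.1830 — 2 statements merged into one kernel-verified Lean document; each statement's English description precedes it below -/
import Mathlib

section
/- Value of λ under exponential noise. Let E1, E2 be i.i.d. Exp(1) random variables and let ν1, ν2 be i.i.d. Exp(γ) random variables (γ > 0), with (E1, E2, ν1, ν2) mutually independent. Then E[ sign( (E1 + ν1) − (E2 + ν2) ) · (E1 − E2) ] = 1 − 1/(1+γ)². Equivalently, writing σ = 1/γ² for the variance of the noise, this value equals (1 + 2√σ)/(1 + √σ)², and in particular it is strictly positive. -/
open MeasureTheory ProbabilityTheory

open Real Set Filter Topology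
open scoped NNReal ENNReal

section Helpers

lemma measurable_realSign : Measurable Real.sign := by
  have h : Real.sign = fun r : ℝ => if r < 0 then (-1:ℝ) else if 0 < r then 1 else 0 := by
    funext r; rfl
  rw [h]
  exact Measurable.ite (measurableSet_Iio (a := (0:ℝ))) measurable_const
    (Measurable.ite (measurableSet_Ioi (a := (0:ℝ))) measurable_const measurable_const)

lemma integral_exp_neg_mul_Ioi {c : ℝ} (hc : 0 < c) (a : ℝ) :
    ∫ x in Ioi a, Real.exp (-(c*x)) = Real.exp (-(c*a))/c := by
  have hderiv : ∀ x ∈ Ici a, HasDerivAt (fun y => -Real.exp (-(c*y))/c) (Real.exp (-(c*x))) x := by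
    intro x _
    have := (ProbabilityTheory.hasDerivAt_neg_exp_mul_exp (r := c) (x := x)).div_const c
    rw [mul_div_cancel_left₀ _ hc.ne'] at this
    exact this
  have hint : IntegrableOn (fun x => Real.exp (-(c*x))) (Ioi a) := by
    simpa [neg_mul] using exp_neg_integrableOn_Ioi a hc
  have htend : Tendsto (fun y => -Real.exp (-(c*y))/c) atTop (𝓝 0) := by
    have h1 : Tendsto (fun y : ℝ => c * y) atTop atTop :=
      Tendsto.const_mul_atTop hc tendsto_id
    have h2 : Tendsto (fun y : ℝ => Real.exp (-(c*y))) atTop (𝓝 0) :=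
      Real.tendsto_exp_neg_atTop_nhds_zero.comp h1
    have := (h2.neg).div_const c
    simpa using this
  have := integral_Ioi_of_hasDerivAt_of_tendsto' hderiv hint htend
  rw [this]; ring

lemma integrableOn_mul_exp_neg_mul {c : ℝ} (hc : 0 < c) :
    IntegrableOn (fun x : ℝ => x * Real.exp (-(c*x))) (Ioi 0) := by
  have := integrableOn_rpow_mul_exp_neg_mul_rpow (p := 1) (s := 1) (b := c)
    (by norm_num) (by norm_num) hc
  refine this.congr_fun (fun x hx => ?_) measurableSet_Ioi
  simp [Real.rpow_one, neg_mul]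

lemma integral_mul_exp_neg_mul_Ioi {c : ℝ} (hc : 0 < c) :
    ∫ x in Ioi 0, x * Real.exp (-(c*x)) = 1/c^2 := by
  have := Real.integral_rpow_mul_exp_neg_mul_Ioi (a := 2) (r := c) (by norm_num) hc
  rw [show (2:ℝ)-1 = 1 by norm_num] at this
  simp only [Real.rpow_one] at this
  rw [this, Real.Gamma_two, mul_one, Real.rpow_two]
  ring

lemma expMeasure_def (r : ℝ) :
    expMeasure r = MeasureTheory.volume.withDensity (exponentialPDF r) := rfl

lemma exponentialPDF_def (r : ℝ) :
    exponentialPDF r = fun x => ENNReal.ofReal (exponentialPDFReal r x) := rfl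

lemma exponentialPDFReal_of_nonneg' {r x : ℝ} (hx : 0 ≤ x) :
    exponentialPDFReal r x = r * Real.exp (-(r*x)) := by
  rw [exponentialPDFReal, gammaPDFReal, if_pos hx]
  simp only [rpow_one, Real.Gamma_one, div_one, sub_self, Real.rpow_zero, mul_one]

lemma exponentialPDFReal_of_neg' {r x : ℝ} (hx : x < 0) :
    exponentialPDFReal r x = 0 := by
  rw [exponentialPDFReal, gammaPDFReal, if_neg (not_le.mpr hx)]

lemma ae_ne_zero_volume : ∀ᵐ x : ℝ, x ≠ (0:ℝ) := by
  have h : MeasureTheory.volume ({(0:ℝ)} : Set ℝ) = 0 := Real.volume_singleton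
  rw [MeasureTheory.ae_iff]
  convert h using 2
  ext x; simp

lemma integral_expMeasure (r : ℝ) (hr : 0 < r) (f : ℝ → ℝ) :
    ∫ x, f x ∂(expMeasure r) = ∫ x in Ioi 0, f x * (r * Real.exp (-(r*x))) := by
  rw [expMeasure_def]
  have hd : exponentialPDF r
      = fun x => ((Real.toNNReal (exponentialPDFReal r x) : ℝ≥0) : ℝ≥0∞) := rfl
  rw [hd, integral_withDensity_eq_integral_smul (measurable_exponentialPDFReal r).real_toNNReal]
  have h1 : ∀ x : ℝ, (Real.toNNReal (exponentialPDFReal r x) : ℝ≥0) • f x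
      = exponentialPDFReal r x * f x := by
    intro x
    rw [NNReal.smul_def, smul_eq_mul, Real.coe_toNNReal _ (exponentialPDFReal_nonneg hr x)]
  simp_rw [h1]
  rw [← setIntegral_eq_integral_of_forall_compl_eq_zero (s := Ici 0)
    (fun x hx => by
      have hx' : x < 0 := by simpa using hx
      rw [exponentialPDFReal_of_neg' hx', zero_mul])]
  rw [MeasureTheory.integral_Ici_eq_integral_Ioi]
  refine setIntegral_congr_fun measurableSet_Ioi (fun x hx => ?_)
  rw [exponentialPDFReal_of_nonneg' (le_of_lt hx)]; ring

lemma integrable_expMeasure_iff (r : ℝ) (hr : 0 < r) (f : ℝ → ℝ) :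
    Integrable f (expMeasure r) ↔
      IntegrableOn (fun x => f x * (r * Real.exp (-(r*x)))) (Ioi 0) := by
  rw [expMeasure_def, exponentialPDF_def,
    integrable_withDensity_iff ((measurable_exponentialPDFReal r).ennreal_ofReal)
    (Filter.Eventually.of_forall fun x => ENNReal.ofReal_lt_top)]
  refine Iff.trans (integrable_congr ?_)
    (MeasureTheory.integrable_indicator_iff (measurableSet_Ioi (a := (0:ℝ))))
  filter_upwards [ae_ne_zero_volume] with x hx
  rcases lt_trichotomy x 0 with h | h | h
  · rw [exponentialPDFReal_of_neg' h]
    simp [Set.indicator_of_notMem (by simpa using h.le : x ∉ Ioi (0:ℝ))]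
  · exact absurd h hx
  · rw [exponentialPDFReal_of_nonneg' h.le,
      Set.indicator_of_mem (by simpa using h : x ∈ Ioi (0:ℝ))]
    rw [ENNReal.toReal_ofReal (by positivity)]

lemma expMeasure_ae_pos (r : ℝ) (hr : 0 < r) : ∀ᵐ x ∂(expMeasure r), 0 < x := by
  rw [MeasureTheory.ae_iff]
  have h : {x : ℝ | ¬ 0 < x} = Iic 0 := by ext x; simp
  rw [h, expMeasure_def, withDensity_apply _ measurableSet_Iic]
  have : ∀ᵐ x ∂(MeasureTheory.volume.restrict (Iic (0:ℝ))), exponentialPDF r x = 0 := by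
    filter_upwards [ae_restrict_mem measurableSet_Iic, ae_restrict_of_ae ae_ne_zero_volume]
      with x hx hx0
    exact exponentialPDF_of_neg (lt_of_le_of_ne hx hx0)
  rw [MeasureTheory.lintegral_congr_ae this, MeasureTheory.lintegral_zero]


lemma abs_realSign_le (r : ℝ) : |Real.sign r| ≤ 1 := by
  rcases Real.sign_apply_eq r with h | h | h <;> rw [h] <;> norm_num

lemma ae_ne_volume (a : ℝ) : ∀ᵐ x : ℝ, x ≠ a := by
  have h : MeasureTheory.volume ({a} : Set ℝ) = 0 := Real.volume_singleton
  rw [MeasureTheory.ae_iff]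
  convert h using 2
  ext x; simp

section gam
variable {γ : ℝ}

lemma exp_integrableOn (hγ : 0 < γ) (a : ℝ) :
    IntegrableOn (fun x : ℝ => Real.exp (-(γ*x))) (Ioi a) := by
  simpa [neg_mul] using exp_neg_integrableOn_Ioi a hγ

lemma integral_const_mul_exp (hγ : 0 < γ) (a b : ℝ) :
    ∫ x in Ioi a, b * Real.exp (-(γ*x)) = b * (Real.exp (-(γ*a))/γ) := by
  rw [MeasureTheory.integral_const_mul, integral_exp_neg_mul_Ioi hγ]

/-- inner integral over d -/
lemma integral_sign_sub_expMeasure (hγ : 0 < γ) (s : ℝ) :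
    ∫ d, Real.sign (s - d) ∂(expMeasure γ)
      = if 0 < s then 1 - 2*Real.exp (-(γ*s)) else -1 := by
  rw [integral_expMeasure γ hγ]
  set F : ℝ → ℝ := fun d => Real.sign (s - d) * (γ * Real.exp (-(γ*d))) with hF
  have hFmeas : Measurable F :=
    (measurable_realSign.comp (measurable_const.sub measurable_id)).mul
      (measurable_const.mul ((measurable_id.const_mul γ).neg.exp))
  have hFbound : ∀ d : ℝ, ‖F d‖ ≤ γ * Real.exp (-(γ*d)) := by
    intro d
    rw [hF, Real.norm_eq_abs, abs_mul, abs_of_nonneg (by positivity : (0:ℝ) ≤ γ * Real.exp (-(γ*d)))]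
    exact mul_le_of_le_one_left (by positivity) (abs_realSign_le _)
  have hFint : ∀ a : ℝ, IntegrableOn F (Ioi a) := by
    intro a
    refine ((exp_integrableOn hγ a).const_mul γ).mono' hFmeas.aestronglyMeasurable.restrict ?_
    exact Filter.Eventually.of_forall hFbound
  by_cases hs : 0 < s
  · rw [if_pos hs]
    have hsplit : Ioc 0 s ∪ Ioi s = Ioi (0:ℝ) := Ioc_union_Ioi_eq_Ioi hs.le
    have hdisj : Disjoint (Ioc 0 s) (Ioi s) := Ioc_disjoint_Ioi le_rfl
    have hgsplit : ∫ d in Ioc 0 s, γ * Real.exp (-(γ*d)) = 1 - γ * (Real.exp (-(γ*s))/γ) := by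
      have := setIntegral_union hdisj measurableSet_Ioi
        (MeasureTheory.IntegrableOn.mono_set ((exp_integrableOn hγ 0).const_mul γ)
          (hsplit ▸ subset_union_left)) ((exp_integrableOn hγ s).const_mul γ)
      rw [hsplit] at this
      rw [eq_sub_iff_add_eq, ← integral_const_mul_exp hγ s γ, ← this,
        integral_const_mul_exp hγ 0 γ]
      field_simp
      simp
    rw [← hsplit, setIntegral_union hdisj measurableSet_Ioi
      (MeasureTheory.IntegrableOn.mono_set (hFint 0) (hsplit ▸ subset_union_left)) (hFint s)]
    have h1 : ∫ d in Ioc 0 s, F d = ∫ d in Ioc 0 s, γ * Real.exp (-(γ*d)) := by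
      refine setIntegral_congr_ae measurableSet_Ioc ?_
      filter_upwards [ae_ne_volume s] with d hd hdm
      simp only [hF]
      have : 0 < s - d := sub_pos.mpr (lt_of_le_of_ne hdm.2 hd)
      rw [Real.sign_of_pos this, one_mul]
    have h2 : ∫ d in Ioi s, F d = - ∫ d in Ioi s, γ * Real.exp (-(γ*d)) := by
      rw [← MeasureTheory.integral_neg]
      refine setIntegral_congr_fun measurableSet_Ioi (fun d hd => ?_)
      simp only [hF]
      have : s - d < 0 := sub_neg.mpr hd
      rw [Real.sign_of_neg this]; ring
    rw [h1, h2, hgsplit, integral_const_mul_exp hγ s γ]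
    field_simp
    ring
  · rw [if_neg hs]
    push_neg at hs
    have h1 : ∫ d in Ioi (0:ℝ), F d = - ∫ d in Ioi (0:ℝ), γ * Real.exp (-(γ*d)) := by
      rw [← MeasureTheory.integral_neg]
      refine setIntegral_congr_fun measurableSet_Ioi (fun d hd => ?_)
      simp only [hF]
      have : s - d < 0 := sub_neg.mpr (lt_of_le_of_lt hs hd)
      rw [Real.sign_of_neg this]; ring
    rw [h1, integral_const_mul_exp hγ 0 γ]
    field_simp
    simp
end gam

section gam2
variable {γ : ℝ}

lemma setIntegral_Ioc_exp (hγ : 0 < γ) {s : ℝ} (hs : 0 < s) :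
    ∫ d in Ioc 0 s, γ * Real.exp (-(γ*d)) = 1 - Real.exp (-(γ*s)) := by
  have hsplit : Ioc 0 s ∪ Ioi s = Ioi (0:ℝ) := Ioc_union_Ioi_eq_Ioi hs.le
  have := setIntegral_union (Ioc_disjoint_Ioi le_rfl) measurableSet_Ioi
    (MeasureTheory.IntegrableOn.mono_set ((exp_integrableOn hγ 0).const_mul γ)
      (hsplit ▸ subset_union_left)) ((exp_integrableOn hγ s).const_mul γ)
  rw [hsplit] at this
  rw [eq_sub_iff_add_eq]
  have h2 : Real.exp (-(γ*s)) = ∫ d in Ioi s, γ * Real.exp (-(γ*d)) := by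
    rw [MeasureTheory.integral_const_mul, integral_exp_neg_mul_Ioi hγ]
    field_simp
  rw [h2, ← this, MeasureTheory.integral_const_mul, integral_exp_neg_mul_Ioi hγ]
  field_simp
  simp

/-- integral over c of h(t+c) -/
lemma integral_hfun_expMeasure (hγ : 0 < γ) (t : ℝ) :
    ∫ c, (if 0 < t + c then 1 - 2*Real.exp (-(γ*(t+c))) else -1) ∂(expMeasure γ)
      = if 0 < t then 1 - Real.exp (-(γ*t)) else -(1 - Real.exp (γ*t)) := by
  rw [integral_expMeasure γ hγ]
  set G : ℝ → ℝ :=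
    fun c => (if 0 < t + c then 1 - 2*Real.exp (-(γ*(t+c))) else -1) * (γ * Real.exp (-(γ*c)))
    with hG
  have hγ2 : (0:ℝ) < 2*γ := by linarith
  have hGmeas : Measurable G := by
    refine Measurable.mul ?_ (measurable_const.mul ((measurable_id.const_mul γ).neg.exp))
    refine Measurable.ite (measurableSet_lt measurable_const
      (measurable_const.add measurable_id)) ?_ measurable_const
    exact (measurable_const.sub
      ((((measurable_const.add measurable_id).const_mul γ).neg.exp).const_mul 2))
  have hGbound : ∀ c : ℝ, ‖G c‖ ≤ γ * Real.exp (-(γ*c)) := by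
    intro c
    rw [hG, Real.norm_eq_abs, abs_mul,
      abs_of_nonneg (by positivity : (0:ℝ) ≤ γ * Real.exp (-(γ*c)))]
    refine mul_le_of_le_one_left (by positivity) ?_
    by_cases h : 0 < t + c
    · rw [if_pos h]
      have h1 : Real.exp (-(γ*(t+c))) ≤ 1 := Real.exp_le_one_iff.mpr (by nlinarith)
      have h2 : 0 < Real.exp (-(γ*(t+c))) := Real.exp_pos _
      rw [abs_le]; constructor <;> nlinarith
    · rw [if_neg h]; norm_num
  have hGint : ∀ a : ℝ, IntegrableOn G (Ioi a) := by
    intro a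
    refine ((exp_integrableOn hγ a).const_mul γ).mono' hGmeas.aestronglyMeasurable.restrict ?_
    exact Filter.Eventually.of_forall hGbound
  have hpos_eval : ∀ a : ℝ, (∀ c ∈ Ioi a, 0 < t + c) →
      ∫ c in Ioi a, G c
        = Real.exp (-(γ*a)) - Real.exp (-(γ*t)) * Real.exp (-(2*γ*a)) := by
    intro a ha
    have hcongr : ∫ c in Ioi a, G c = ∫ c in Ioi a,
        (γ * Real.exp (-(γ*c)) - (2*γ*Real.exp (-(γ*t))) * Real.exp (-(2*γ*c))) := by
      refine setIntegral_congr_fun measurableSet_Ioi (fun c hc => ?_)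
      simp only [hG]
      rw [if_pos (ha c hc)]
      have hE : Real.exp (-(γ*(t+c))) * Real.exp (-(γ*c))
          = Real.exp (-(γ*t)) * Real.exp (-(2*γ*c)) := by
        rw [← Real.exp_add, ← Real.exp_add]; ring_nf
      linear_combination (-2*γ) * hE
    rw [hcongr, MeasureTheory.integral_sub ((exp_integrableOn hγ a).const_mul γ)
      ((exp_integrableOn hγ2 a).const_mul _), MeasureTheory.integral_const_mul,
      MeasureTheory.integral_const_mul, integral_exp_neg_mul_Ioi hγ, integral_exp_neg_mul_Ioi hγ2]
    field_simp
  by_cases ht : 0 < t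
  · rw [if_pos ht, hpos_eval 0 (fun c hc => by simp only [mem_Ioi] at hc; linarith)]
    norm_num
  · rw [if_neg ht]
    push_neg at ht
    rcases eq_or_lt_of_le ht with rfl | ht0
    · rw [hpos_eval 0 (fun c hc => by simp only [mem_Ioi] at hc; linarith)]
      simp
    · have hmt : (0:ℝ) < -t := by linarith
      rw [← Ioc_union_Ioi_eq_Ioi hmt.le,
        setIntegral_union (Ioc_disjoint_Ioi le_rfl) measurableSet_Ioi
          (MeasureTheory.IntegrableOn.mono_set (hGint 0)
            ((Ioc_union_Ioi_eq_Ioi hmt.le) ▸ subset_union_left)) (hGint (-t))]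
      have hp1 : ∫ c in Ioc 0 (-t), G c = -(1 - Real.exp (γ*t)) := by
        have : ∫ c in Ioc 0 (-t), G c = ∫ c in Ioc 0 (-t), -(γ * Real.exp (-(γ*c))) := by
          refine setIntegral_congr_fun measurableSet_Ioc (fun c hc => ?_)
          simp only [hG]
          rw [if_neg (by rcases hc with ⟨_, hc2⟩; push_neg; linarith)]
          ring
        rw [this, MeasureTheory.integral_neg, setIntegral_Ioc_exp hγ hmt]
        rw [mul_neg, neg_neg]
      have hp2 : ∫ c in Ioi (-t), G c = 0 := by
        rw [hpos_eval (-t) (fun c hc => by simp only [mem_Ioi] at hc; linarith)]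
        rw [mul_neg, neg_neg, show -(2*γ*-t) = 2*(γ*t) by ring, ← Real.exp_add]
        rw [show -(γ*t) + 2*(γ*t) = γ*t by ring]
        exact sub_self _
      rw [hp1, hp2, add_zero]
end gam2


noncomputable def pphi (γ u : ℝ) : ℝ := if 0 < u then u * (1 - Real.exp (-(γ*u))) else 0

lemma measurable_pphi (γ : ℝ) : Measurable (pphi γ) := by
  unfold pphi
  exact Measurable.ite (measurableSet_lt measurable_const measurable_id)
    (measurable_id.mul (measurable_const.sub ((measurable_id.const_mul γ).neg.exp)))
    measurable_const

lemma abs_pphi_le {γ : ℝ} (hγ : 0 < γ) (u : ℝ) : |pphi γ u| ≤ |u| := by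
  unfold pphi
  by_cases h : 0 < u
  · rw [if_pos h, abs_of_pos h, abs_mul, abs_of_pos h]
    refine mul_le_of_le_one_right h.le ?_
    have h1 : Real.exp (-(γ*u)) ≤ 1 := Real.exp_le_one_iff.mpr (by nlinarith)
    have h2 : 0 < Real.exp (-(γ*u)) := Real.exp_pos _
    rw [abs_le]; constructor <;> nlinarith
  · rw [if_neg h]; simp [abs_nonneg]

lemma gfun_mul_eq {γ : ℝ} (u : ℝ) :
    (if 0 < u then 1 - Real.exp (-(γ*u)) else -(1 - Real.exp (γ*u))) * u
      = pphi γ u + pphi γ (-u) := by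
  unfold pphi
  rcases lt_trichotomy 0 u with h | h | h
  · rw [if_pos h, if_pos h, if_neg (by linarith), add_zero]; ring
  · rw [← h]; norm_num
  · rw [if_neg (by linarith), if_neg (by linarith), if_pos (by linarith),
      show -(γ * -u) = γ*u by ring]
    ring

lemma inner_pphi_eval {γ : ℝ} (hγ : 0 < γ) {b : ℝ} (hb : 0 < b) :
    ∫ a, pphi γ (a - b) ∂(expMeasure 1)
      = Real.exp (-(1*b)) * (1 - 1/(1+γ)^2) := by
  rw [integral_expMeasure 1 one_pos]
  have h1 : ∫ a in Ioi (0:ℝ), pphi γ (a-b) * (1*Real.exp (-(1*a)))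
      = ∫ a : ℝ, pphi γ (a-b) * (1*Real.exp (-(1*a))) := by
    refine setIntegral_eq_integral_of_forall_compl_eq_zero (fun a ha => ?_)
    have ha' : a ≤ 0 := by simpa using ha
    rw [pphi, if_neg (by push_neg; linarith), zero_mul]
  rw [h1]
  have h2 : ∀ a : ℝ, pphi γ (a-b) * (1*Real.exp (-(1*a)))
      = (fun u => pphi γ u * (1*Real.exp (-(1*u))) * Real.exp (-(1*b))) (a - b) := by
    intro a
    show _ = pphi γ (a-b) * (1*Real.exp (-(1*(a-b)))) * Real.exp (-(1*b))
    have hE : Real.exp (-(1*(a-b))) * Real.exp (-(1*b)) = Real.exp (-(1*a)) := by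
      rw [← Real.exp_add]; ring_nf
    linear_combination (-(pphi γ (a-b))) * hE
  simp_rw [h2]
  rw [MeasureTheory.integral_sub_right_eq_self
    (fun u => pphi γ u * (1*Real.exp (-(1*u))) * Real.exp (-(1*b))) b]
  rw [MeasureTheory.integral_mul_const]
  have h3 : ∫ u : ℝ, pphi γ u * (1*Real.exp (-(1*u)))
      = ∫ u in Ioi (0:ℝ), pphi γ u * (1*Real.exp (-(1*u))) := by
    refine (setIntegral_eq_integral_of_forall_compl_eq_zero (fun u hu => ?_)).symm
    have hu' : u ≤ 0 := by simpa using hu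
    rw [pphi, if_neg (by push_neg; linarith), zero_mul]
  have h4 : ∫ u in Ioi (0:ℝ), pphi γ u * (1*Real.exp (-(1*u)))
      = ∫ u in Ioi (0:ℝ), (u * Real.exp (-(1*u)) - u * Real.exp (-((1+γ)*u))) := by
    refine setIntegral_congr_fun measurableSet_Ioi (fun u hu => ?_)
    rw [pphi, if_pos (mem_Ioi.mp hu)]
    have hE : Real.exp (-(γ*u)) * Real.exp (-(1*u)) = Real.exp (-((1+γ)*u)) := by
      rw [← Real.exp_add]; ring_nf
    linear_combination (-u) * hE
  have hγ1 : (0:ℝ) < 1 + γ := by linarith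
  rw [h3, h4, MeasureTheory.integral_sub (integrableOn_mul_exp_neg_mul one_pos)
    (integrableOn_mul_exp_neg_mul hγ1), integral_mul_exp_neg_mul_Ioi one_pos,
    integral_mul_exp_neg_mul_Ioi hγ1]
  ring

lemma abs_sub_le'' (a b : ℝ) : |a - b| ≤ |a| + |b| := by
  rw [sub_eq_add_neg]
  exact (abs_add_le a (-b)).trans (by rw [abs_neg])

section prodstuff
variable {α β : Type*} [MeasurableSpace α] [MeasurableSpace β]
  {μ : Measure α} {ν : Measure β}

lemma integrable_comp_fst' [IsProbabilityMeasure μ] [IsProbabilityMeasure ν]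
    {h : α → ℝ} (hm : Measurable h) (hi : Integrable h μ) :
    Integrable (fun p : α × β => h p.1) (μ.prod ν) := by
  have hmap : Measure.map Prod.fst (μ.prod ν) = μ := by
    rw [Measure.map_fst_prod]; simp
  have hg : AEStronglyMeasurable h (Measure.map Prod.fst (μ.prod ν)) := by
    rw [hmap]; exact hm.aestronglyMeasurable
  have := (integrable_map_measure hg measurable_fst.aemeasurable).mp (by rwa [hmap])
  exact this

lemma integrable_comp_snd' [IsProbabilityMeasure μ] [IsProbabilityMeasure ν]
    {h : β → ℝ} (hm : Measurable h) (hi : Integrable h ν) :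
    Integrable (fun p : α × β => h p.2) (μ.prod ν) := by
  have hmap : Measure.map Prod.snd (μ.prod ν) = ν := by
    rw [Measure.map_snd_prod]; simp
  have hg : AEStronglyMeasurable h (Measure.map Prod.snd (μ.prod ν)) := by
    rw [hmap]; exact hm.aestronglyMeasurable
  have := (integrable_map_measure hg measurable_snd.aemeasurable).mp (by rwa [hmap])
  exact this
end prodstuff

section prodlevel
variable {γ : ℝ}

lemma integrable_id_exp1 : Integrable (fun x : ℝ => x) (expMeasure 1) := by
  rw [integrable_expMeasure_iff 1 one_pos]
  have := integrableOn_mul_exp_neg_mul (c := 1) one_pos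
  refine this.congr_fun (fun x _ => by ring) measurableSet_Ioi

lemma integrable_abs_exp1 : Integrable (fun x : ℝ => |x|) (expMeasure 1) :=
  integrable_id_exp1.abs

noncomputable abbrev rho : Measure ℝ := expMeasure 1

instance : IsProbabilityMeasure rho := isProbabilityMeasure_expMeasure one_pos

lemma integrable_D : Integrable (fun z : ℝ × ℝ => |z.1| + |z.2|) (rho.prod rho) :=
  (integrable_comp_fst' measurable_abs integrable_abs_exp1).add
    (integrable_comp_snd' measurable_abs integrable_abs_exp1)

lemma integrable_pphi21 (hγ : 0 < γ) :
    Integrable (fun z : ℝ × ℝ => pphi γ (z.2 - z.1)) (rho.prod rho) := by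
  refine integrable_D.mono' ((measurable_pphi γ).comp
    (measurable_snd.sub measurable_fst)).aestronglyMeasurable ?_
  filter_upwards with z
  rw [Real.norm_eq_abs]
  exact (abs_pphi_le hγ _).trans ((abs_sub_le'' _ _).trans (by rw [add_comm]))

lemma integrable_pphi12 (hγ : 0 < γ) :
    Integrable (fun z : ℝ × ℝ => pphi γ (z.1 - z.2)) (rho.prod rho) := by
  refine integrable_D.mono' ((measurable_pphi γ).comp
    (measurable_fst.sub measurable_snd)).aestronglyMeasurable ?_
  filter_upwards with z
  rw [Real.norm_eq_abs]
  exact (abs_pphi_le hγ _).trans (abs_sub_le'' _ _)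

lemma swap_pphi (hγ : 0 < γ) :
    ∫ z, pphi γ (z.1 - z.2) ∂(rho.prod rho) = ∫ z, pphi γ (z.2 - z.1) ∂(rho.prod rho) := by
  rw [← integral_prod_swap (fun z : ℝ × ℝ => pphi γ (z.1 - z.2))]
  simp only [Prod.fst_swap, Prod.snd_swap]

lemma J_eval (hγ : 0 < γ) :
    ∫ z, pphi γ (z.1 - z.2) ∂(rho.prod rho) = (1 - 1/(1+γ)^2) * (1/2) := by
  rw [swap_pphi hγ, integral_prod _ (integrable_pphi21 hγ)]
  have hae : ∀ᵐ x ∂rho, (∫ y, pphi γ (y - x) ∂rho)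
      = Real.exp (-(1*x)) * (1 - 1/(1+γ)^2) := by
    filter_upwards [expMeasure_ae_pos 1 one_pos] with x hx using inner_pphi_eval hγ hx
  rw [integral_congr_ae hae, integral_expMeasure 1 one_pos]
  have hcongr : ∫ x in Ioi (0:ℝ),
      (Real.exp (-(1*x)) * (1 - 1/(1+γ)^2)) * (1*Real.exp (-(1*x)))
      = ∫ x in Ioi (0:ℝ), (1 - 1/(1+γ)^2) * Real.exp (-(2*x)) := by
    refine setIntegral_congr_fun measurableSet_Ioi (fun x _ => ?_)
    have hE : Real.exp (-(1*x)) * Real.exp (-(1*x)) = Real.exp (-(2*x)) := by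
      rw [← Real.exp_add]; ring_nf
    linear_combination (1 - 1/(1+γ)^2) * hE
  rw [hcongr, MeasureTheory.integral_const_mul, integral_exp_neg_mul_Ioi two_pos 0]
  norm_num

lemma C_eval (hγ : 0 < γ) :
    ∫ q : ℝ × ℝ, (if 0 < q.1 - q.2 then 1 - Real.exp (-(γ*(q.1-q.2)))
        else -(1 - Real.exp (γ*(q.1-q.2)))) * (q.1 - q.2) ∂(rho.prod rho)
      = 1 - 1/(1+γ)^2 := by
  have hpt : ∀ q : ℝ × ℝ, (if 0 < q.1 - q.2 then 1 - Real.exp (-(γ*(q.1-q.2)))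
      else -(1 - Real.exp (γ*(q.1-q.2)))) * (q.1 - q.2)
      = pphi γ (q.1 - q.2) + pphi γ (q.2 - q.1) := by
    intro q
    rw [gfun_mul_eq (γ := γ) (q.1 - q.2), neg_sub]
  simp_rw [hpt]
  rw [MeasureTheory.integral_add (integrable_pphi12 hγ) (integrable_pphi21 hγ),
    ← swap_pphi hγ, J_eval hγ]
  ring

lemma K_eval (hγ : 0 < γ) (t : ℝ) :
    ∫ r : ℝ × ℝ, Real.sign (t + r.1 - r.2) ∂((expMeasure γ).prod (expMeasure γ))
      = if 0 < t then 1 - Real.exp (-(γ*t)) else -(1 - Real.exp (γ*t)) := by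
  haveI : IsProbabilityMeasure (expMeasure γ) := isProbabilityMeasure_expMeasure hγ
  have hmeas : Measurable (fun r : ℝ × ℝ => Real.sign (t + r.1 - r.2)) :=
    measurable_realSign.comp ((measurable_const.add measurable_fst).sub measurable_snd)
  have hint : Integrable (fun r : ℝ × ℝ => Real.sign (t + r.1 - r.2))
      ((expMeasure γ).prod (expMeasure γ)) := by
    refine (integrable_const (1:ℝ)).mono' hmeas.aestronglyMeasurable ?_
    filter_upwards with r
    rw [Real.norm_eq_abs]
    exact abs_realSign_le _
  rw [integral_prod _ hint]
  simp only []
  simp_rw [integral_sign_sub_expMeasure hγ]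
  exact integral_hfun_expMeasure hγ t

lemma main_analytic (hγ : 0 < γ) :
    ∫ p : (ℝ × ℝ) × (ℝ × ℝ),
        Real.sign ((p.1.1 + p.2.1) - (p.1.2 + p.2.2)) * (p.1.1 - p.1.2)
      ∂((rho.prod rho).prod ((expMeasure γ).prod (expMeasure γ)))
      = 1 - 1/(1+γ)^2 := by
  haveI : IsProbabilityMeasure (expMeasure γ) := isProbabilityMeasure_expMeasure hγ
  have hFmeas : Measurable (fun p : (ℝ × ℝ) × (ℝ × ℝ) =>
      Real.sign ((p.1.1 + p.2.1) - (p.1.2 + p.2.2)) * (p.1.1 - p.1.2)) :=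
    (measurable_realSign.comp (((measurable_fst.fst.add measurable_snd.fst)).sub
      (measurable_fst.snd.add measurable_snd.snd))).mul
      (measurable_fst.fst.sub measurable_fst.snd)
  have hDbig : Integrable (fun p : (ℝ × ℝ) × (ℝ × ℝ) => |p.1.1| + |p.1.2|)
      ((rho.prod rho).prod ((expMeasure γ).prod (expMeasure γ))) :=
    integrable_comp_fst' ((measurable_fst.abs).add (measurable_snd.abs)) integrable_D
  have hFint : Integrable (fun p : (ℝ × ℝ) × (ℝ × ℝ) =>
      Real.sign ((p.1.1 + p.2.1) - (p.1.2 + p.2.2)) * (p.1.1 - p.1.2))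
      ((rho.prod rho).prod ((expMeasure γ).prod (expMeasure γ))) := by
    refine hDbig.mono' hFmeas.aestronglyMeasurable ?_
    filter_upwards with p
    rw [Real.norm_eq_abs, abs_mul]
    calc |Real.sign ((p.1.1 + p.2.1) - (p.1.2 + p.2.2))| * |p.1.1 - p.1.2|
        ≤ 1 * |p.1.1 - p.1.2| :=
          mul_le_mul_of_nonneg_right (abs_realSign_le _) (abs_nonneg _)
      _ = |p.1.1 - p.1.2| := one_mul _
      _ ≤ |p.1.1| + |p.1.2| := abs_sub_le'' _ _
  rw [integral_prod _ hFint]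
  have hinner : ∀ q : ℝ × ℝ,
      (∫ r : ℝ × ℝ, Real.sign ((q.1 + r.1) - (q.2 + r.2)) * (q.1 - q.2)
        ∂((expMeasure γ).prod (expMeasure γ)))
      = (if 0 < q.1 - q.2 then 1 - Real.exp (-(γ*(q.1-q.2)))
          else -(1 - Real.exp (γ*(q.1-q.2)))) * (q.1 - q.2) := by
    intro q
    have harg : ∀ r : ℝ × ℝ, (q.1 + r.1) - (q.2 + r.2) = q.1 - q.2 + r.1 - r.2 :=
      fun r => by ring
    simp_rw [harg]
    rw [MeasureTheory.integral_mul_const, K_eval hγ (q.1 - q.2)]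
  simp only []
  simp_rw [hinner]
  exact C_eval hγ
end prodlevel


lemma iIndepFun_ae_transfer {Ω ι : Type*} [MeasurableSpace Ω] {μ : Measure Ω}
    {β : ι → Type*} [m : ∀ i, MeasurableSpace (β i)] {f g : ∀ i, Ω → β i}
    (hf : iIndepFun f μ) (h : ∀ i, f i =ᵐ[μ] g i) : iIndepFun g μ := by
  rw [iIndepFun_iff_measure_inter_preimage_eq_mul] at hf ⊢
  intro S sets H
  have h1 : ∀ i, μ (g i ⁻¹' sets i) = μ (f i ⁻¹' sets i) := by
    intro i
    refine measure_congr ?_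
    filter_upwards [h i] with ω hω
    change (ω ∈ g i ⁻¹' sets i) = (ω ∈ f i ⁻¹' sets i)
    simp only [Set.mem_preimage, hω]
  have h2 : μ (⋂ i ∈ S, g i ⁻¹' sets i) = μ (⋂ i ∈ S, f i ⁻¹' sets i) := by
    refine measure_congr ?_
    have hS : ∀ᵐ ω ∂μ, ∀ i ∈ S, f i ω = g i ω :=
      (ae_ball_iff S.countable_toSet).2 fun i _ => h i
    filter_upwards [hS] with ω hω
    change (ω ∈ ⋂ i ∈ S, g i ⁻¹' sets i) = (ω ∈ ⋂ i ∈ S, f i ⁻¹' sets i)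
    simp only [Set.mem_iInter, Set.mem_preimage, eq_iff_iff]
    constructor
    · intro hall i hi; rw [hω i hi]; exact hall i hi
    · intro hall i hi; rw [← hω i hi]; exact hall i hi
  rw [h2, hf S H]
  exact Finset.prod_congr rfl fun i _ => (h1 i).symm

lemma aemeasurable_of_map_expMeasure {Ω : Type*} [MeasurableSpace Ω] {μ : Measure Ω}
    {f : Ω → ℝ} {r : ℝ} (hr : 0 < r) (h : Measure.map f μ = expMeasure r) :
    AEMeasurable f μ := by
  by_contra hc
  rw [Measure.map_of_not_aemeasurable hc] at h
  haveI := isProbabilityMeasure_expMeasure hr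
  exact (IsProbabilityMeasure.ne_zero (expMeasure r)) h.symm


end Helpers

/-- Value of λ under exponential noise. -/
theorem lambda_exponential_noise
    (Ω : Type) [MeasurableSpace Ω] (μ : Measure Ω) [IsProbabilityMeasure μ]
    (γ : ℝ) (hγ : 0 < γ)
    (E1 E2 ν1 ν2 : Ω → ℝ)
    (hindep : iIndepFun ![E1, E2, ν1, ν2] μ)
    (hE1 : Measure.map E1 μ = expMeasure 1)
    (hE2 : Measure.map E2 μ = expMeasure 1)
    (hν1 : Measure.map ν1 μ = expMeasure γ)
    (hν2 : Measure.map ν2 μ = expMeasure γ) :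
    (∫ ω, Real.sign ((E1 ω + ν1 ω) - (E2 ω + ν2 ω)) * (E1 ω - E2 ω) ∂μ)
        = 1 - 1 / (1 + γ) ^ 2 ∧
    (∀ σ : ℝ, σ = 1 / γ ^ 2 →
      (∫ ω, Real.sign ((E1 ω + ν1 ω) - (E2 ω + ν2 ω)) * (E1 ω - E2 ω) ∂μ)
        = (1 + 2 * Real.sqrt σ) / (1 + Real.sqrt σ) ^ 2) ∧
    0 < ∫ ω, Real.sign ((E1 ω + ν1 ω) - (E2 ω + ν2 ω)) * (E1 ω - E2 ω) ∂μ := by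
  have hae1 : AEMeasurable E1 μ := aemeasurable_of_map_expMeasure one_pos hE1
  have hae2 : AEMeasurable E2 μ := aemeasurable_of_map_expMeasure one_pos hE2
  have hae3 : AEMeasurable ν1 μ := aemeasurable_of_map_expMeasure hγ hν1
  have hae4 : AEMeasurable ν2 μ := aemeasurable_of_map_expMeasure hγ hν2
  set g : Fin 4 → Ω → ℝ := ![hae1.mk E1, hae2.mk E2, hae3.mk ν1, hae4.mk ν2] with hg
  have haeq : ∀ i : Fin 4, (![E1, E2, ν1, ν2]) i =ᵐ[μ] g i := by
    intro i
    fin_cases i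
    · exact hae1.ae_eq_mk
    · exact hae2.ae_eq_mk
    · exact hae3.ae_eq_mk
    · exact hae4.ae_eq_mk
  have hmeas : ∀ i, Measurable (g i) := by
    intro i
    fin_cases i
    · exact hae1.measurable_mk
    · exact hae2.measurable_mk
    · exact hae3.measurable_mk
    · exact hae4.measurable_mk
  have hindep' : iIndepFun g μ := iIndepFun_ae_transfer hindep haeq
  have hmap0 : Measure.map (g 0) μ = expMeasure 1 := by
    rw [← Measure.map_congr (haeq 0)]; exact hE1
  have hmap1 : Measure.map (g 1) μ = expMeasure 1 := by
    rw [← Measure.map_congr (haeq 1)]; exact hE2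
  have hmap2 : Measure.map (g 2) μ = expMeasure γ := by
    rw [← Measure.map_congr (haeq 2)]; exact hν1
  have hmap3 : Measure.map (g 3) μ = expMeasure γ := by
    rw [← Measure.map_congr (haeq 3)]; exact hν2
  have h01 : Measure.map (fun ω => (g 0 ω, g 1 ω)) μ = (expMeasure 1).prod (expMeasure 1) := by
    have h := (indepFun_iff_map_prod_eq_prod_map_map (hmeas 0).aemeasurable
      (hmeas 1).aemeasurable).mp (hindep'.indepFun (by decide))
    rwa [hmap0, hmap1] at h
  have h23 : Measure.map (fun ω => (g 2 ω, g 3 ω)) μ = (expMeasure γ).prod (expMeasure γ) := by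
    have h := (indepFun_iff_map_prod_eq_prod_map_map (hmeas 2).aemeasurable
      (hmeas 3).aemeasurable).mp (hindep'.indepFun (by decide))
    rwa [hmap2, hmap3] at h
  have houter : Measure.map (fun ω => ((g 0 ω, g 1 ω), (g 2 ω, g 3 ω))) μ
      = ((expMeasure 1).prod (expMeasure 1)).prod ((expMeasure γ).prod (expMeasure γ)) := by
    have h := (indepFun_iff_map_prod_eq_prod_map_map
      (((hmeas 0).prodMk (hmeas 1)).aemeasurable)
      (((hmeas 2).prodMk (hmeas 3)).aemeasurable)).mp
      (hindep'.indepFun_prodMk_prodMk hmeas 0 1 2 3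
        (by decide) (by decide) (by decide) (by decide))
    rwa [h01, h23] at h
  have hval : (∫ ω, Real.sign ((E1 ω + ν1 ω) - (E2 ω + ν2 ω)) * (E1 ω - E2 ω) ∂μ)
      = 1 - 1/(1+γ)^2 := by
    have hcongr : (∫ ω, Real.sign ((E1 ω + ν1 ω) - (E2 ω + ν2 ω)) * (E1 ω - E2 ω) ∂μ)
        = ∫ ω, Real.sign ((g 0 ω + g 2 ω) - (g 1 ω + g 3 ω)) * (g 0 ω - g 1 ω) ∂μ := by
      refine integral_congr_ae ?_
      filter_upwards [haeq 0, haeq 1, haeq 2, haeq 3] with ω h0 h1 h2 h3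
      rw [show E1 ω = g 0 ω from h0, show E2 ω = g 1 ω from h1,
        show ν1 ω = g 2 ω from h2, show ν2 ω = g 3 ω from h3]
    rw [hcongr]
    have hT : Measurable (fun ω => ((g 0 ω, g 1 ω), (g 2 ω, g 3 ω))) :=
      ((hmeas 0).prodMk (hmeas 1)).prodMk ((hmeas 2).prodMk (hmeas 3))
    have hF : Measurable (fun p : (ℝ × ℝ) × (ℝ × ℝ) =>
        Real.sign ((p.1.1 + p.2.1) - (p.1.2 + p.2.2)) * (p.1.1 - p.1.2)) :=
      (measurable_realSign.comp (((measurable_fst.fst.add measurable_snd.fst)).sub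
        (measurable_fst.snd.add measurable_snd.snd))).mul
        (measurable_fst.fst.sub measurable_fst.snd)
    rw [show (∫ ω, Real.sign ((g 0 ω + g 2 ω) - (g 1 ω + g 3 ω)) * (g 0 ω - g 1 ω) ∂μ)
        = ∫ p : (ℝ × ℝ) × (ℝ × ℝ),
            Real.sign ((p.1.1 + p.2.1) - (p.1.2 + p.2.2)) * (p.1.1 - p.1.2)
          ∂(Measure.map (fun ω => ((g 0 ω, g 1 ω), (g 2 ω, g 3 ω))) μ) from
      (integral_map hT.aemeasurable hF.aestronglyMeasurable).symm, houter]
    exact main_analytic hγ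
  refine ⟨hval, fun σ hσ => ?_, ?_⟩
  · rw [hval, hσ]
    have h1 : Real.sqrt (1/γ^2) = 1/γ := by
      rw [show (1:ℝ)/γ^2 = (1/γ)^2 by ring, Real.sqrt_sq (by positivity)]
    rw [h1]
    have hγ' : γ ≠ 0 := ne_of_gt hγ
    have h1γ : (1:ℝ) + γ ≠ 0 := by positivity
    field_simp
    ring
  · rw [hval]
    have h2 : 1 < (1+γ)^2 := by nlinarith
    have h3 : 1/(1+γ)^2 < 1 := by
      rw [div_lt_one (by positivity)]; exact h2
    linarith
end

section
/- Correctness of the sub-exponential (SubExpPhase) initialization in expectation. Let x0, x ∈ ℂ^n with ‖x0‖ = ‖x‖ = 1 and let a be a standard complex Gaussian vector in ℂ^n. Then E[ |⟨a, x0⟩|² · |⟨a, x⟩|² ] = |⟨x0, x⟩|² + 1. Equivalently, the matrix C = E[ |⟨a, x0⟩|² · a a^* ] satisfies x^* C x = |⟨x0, x⟩|² + 1 for every unit vector x, i.e., C = x0 x0^* + I_n. -/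
open MeasureTheory ProbabilityTheory Matrix
open scoped InnerProductSpace ComplexConjugate BigOperators

noncomputable section

instance {n : ℕ} : MeasurableSpace (EuclideanSpace ℂ (Fin n)) := MeasurableSpace.pi.comap WithLp.ofLp
instance {n : ℕ} : BorelSpace (EuclideanSpace ℂ (Fin n)) := PiLp.borelSpace 2

/-- Law of a standard complex Gaussian in `ℂ`: real and imaginary parts are iid `N(0, 1/2)`. -/
def complexGaussian : Measure ℂ :=
  ((gaussianReal 0 (1/2)).prod (gaussianReal 0 (1/2))).map Complex.equivRealProd.symm

/-- Law of a standard complex Gaussian vector in `ℂ^n` (the pushforward to `ℂ^n` of the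
centered Gaussian product measure with coordinate variance `1/2`). -/
def stdCGaussian (n : ℕ) : Measure (EuclideanSpace ℂ (Fin n)) :=
  (Measure.pi fun _ : Fin n => complexGaussian).map (WithLp.toLp 2)

/-- The rank-one matrix `a a^*`, with entries `a_j conj (a_k)`. -/
def outerC {n : ℕ} (a : EuclideanSpace ℂ (Fin n)) : Matrix (Fin n) (Fin n) ℂ :=
  fun j k => a j * (starRingEnd ℂ) (a k)

/-- The real quadratic form `x ↦ x^* A x` of a (Hermitian) matrix `A`. -/
def qf {n : ℕ} (A : Matrix (Fin n) (Fin n) ℂ) (x : EuclideanSpace ℂ (Fin n)) : ℝ :=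
  (star (fun j => x j) ⬝ᵥ A.mulVec (fun j => x j)).re

section Aux
open scoped ENNReal NNReal Real

namespace SubExpAux

abbrev gHalf : Measure ℝ := gaussianReal 0 (1/2)
abbrev prodG : Measure (ℝ × ℝ) := gHalf.prod gHalf

lemma gaussianHalf_eq : gHalf =
    volume.withDensity (fun x => ((gaussianPDFReal 0 (1/2) x).toNNReal : ℝ≥0∞)) := by
  rw [gHalf, gaussianReal_of_var_ne_zero 0 (by norm_num)]
  rfl

lemma pdfHalf_eq (x : ℝ) :
    gaussianPDFReal 0 (1/2) x = (Real.sqrt π)⁻¹ * Real.exp (-x^2) := by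
  have h2 : Real.sqrt 2 ≠ 0 := by positivity
  rw [gaussianPDFReal]
  norm_num
  field_simp

lemma integral_gaussianHalf (g : ℝ → ℝ) :
    ∫ x, g x ∂gHalf = (Real.sqrt π)⁻¹ * ∫ x, g x * Real.exp (-x^2) := by
  rw [gaussianHalf_eq,
    integral_withDensity_eq_integral_smul
      ((measurable_gaussianPDFReal 0 (1/2)).real_toNNReal) g, ← integral_const_mul]
  congr 1 with x
  rw [NNReal.smul_def, Real.coe_toNNReal _ (gaussianPDFReal_nonneg 0 (1/2) x), pdfHalf_eq,
    smul_eq_mul]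
  ring

lemma integrable_pow_gaussianHalf (k : ℕ) :
    Integrable (fun x => x ^ k) gHalf := by
  rw [gaussianHalf_eq,
    integrable_withDensity_iff_integrable_smul
      ((measurable_gaussianPDFReal 0 (1/2)).real_toNNReal)]
  have h : Integrable (fun x : ℝ => x ^ (k:ℝ) * Real.exp (-1 * x^2)) volume :=
    integrable_rpow_mul_exp_neg_mul_sq one_pos
      (lt_of_lt_of_le neg_one_lt_zero (by positivity))
  simp_rw [Real.rpow_natCast, neg_one_mul] at h
  apply (h.const_mul ((Real.sqrt π)⁻¹)).congr
  filter_upwards with x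
  rw [NNReal.smul_def, Real.coe_toNNReal _ (gaussianPDFReal_nonneg 0 (1/2) x), pdfHalf_eq,
    smul_eq_mul]
  ring

lemma integral_even_exp (m : ℕ) :
    ∫ x : ℝ, x ^ (2*m) * Real.exp (-x^2) = Real.Gamma ((2*m+1)/2) := by
  have habs := integral_comp_abs (f := fun t : ℝ => t ^ (2*m) * Real.exp (-t^2))
  simp only [(even_two_mul m).pow_abs, _root_.sq_abs] at habs
  rw [habs]
  have h2 : ∫ x in Set.Ioi (0:ℝ), x ^ (2*m) * Real.exp (-x^2)
      = ∫ x in Set.Ioi (0:ℝ), x ^ ((2*m : ℕ):ℝ) * Real.exp (-1 * x^((2:ℕ):ℝ)) := by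
    refine setIntegral_congr_fun measurableSet_Ioi (fun x hx => ?_)
    rw [Real.rpow_natCast, Real.rpow_natCast]
    norm_num
  rw [h2, show ((2:ℕ):ℝ) = (2:ℝ) by norm_num,
    integral_rpow_mul_exp_neg_mul_rpow two_pos
      (lt_of_lt_of_le neg_one_lt_zero (by positivity)) one_pos, Real.one_rpow]
  push_cast
  ring

lemma gmom (m : ℕ) :
    ∫ x, x ^ (2*m) ∂gHalf = (Real.sqrt π)⁻¹ * Real.Gamma ((2*m+1)/2) := by
  rw [integral_gaussianHalf, integral_even_exp]

lemma gmom0 : ∫ x, x ^ 0 ∂gHalf = 1 := by simp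

lemma gmom2 : ∫ x, x ^ 2 ∂gHalf = 1/2 := by
  have h := gmom 1
  norm_num at h ⊢
  rw [h, show ((3:ℝ)/2) = 1/2 + 1 by norm_num, Real.Gamma_add_one (by norm_num),
    Real.Gamma_one_half_eq]
  have : Real.sqrt π ≠ 0 := by positivity
  field_simp

lemma gmom4 : ∫ x, x ^ 4 ∂gHalf = 3/4 := by
  have h := gmom 2
  norm_num at h ⊢
  rw [h, show ((5:ℝ)/2) = 3/2 + 1 by norm_num, Real.Gamma_add_one (by norm_num),
    show ((3:ℝ)/2) = 1/2 + 1 by norm_num, Real.Gamma_add_one (by norm_num),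
    Real.Gamma_one_half_eq]
  have : Real.sqrt π ≠ 0 := by positivity
  field_simp
  ring

lemma cg_eq : complexGaussian = prodG.map Complex.measurableEquivRealProd.symm := rfl

instance : IsProbabilityMeasure complexGaussian := by
  rw [cg_eq]
  exact Measure.isProbabilityMeasure_map Complex.measurableEquivRealProd.symm.measurable.aemeasurable

lemma integral_cg {E : Type*} [NormedAddCommGroup E] [NormedSpace ℝ E] (f : ℂ → E) :
    ∫ z, f z ∂complexGaussian = ∫ p : ℝ × ℝ, f (p.1 + p.2 * Complex.I) ∂prodG := by
  rw [cg_eq, integral_map_equiv]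
  congr 1 with p
  simp [Complex.mk_eq_add_mul_I]

lemma integrable_cg_iff {E : Type*} [NormedAddCommGroup E] (f : ℂ → E) :
    Integrable f complexGaussian
      ↔ Integrable (fun p : ℝ × ℝ => f (p.1 + p.2 * Complex.I)) prodG := by
  rw [cg_eq, integrable_map_equiv]
  constructor <;> intro h <;> apply h.congr <;> filter_upwards with p <;>
    simp [Function.comp, Complex.mk_eq_add_mul_I]

lemma gmap_neg : Measure.map (fun x : ℝ => -x) gHalf = gHalf := by
  have h := gaussianReal_map_const_mul (μ := 0) (v := 1/2) (-1)
  have h1 : (NNReal.mk ((-1:ℝ)^2) (sq_nonneg _)) = 1 := by ext; norm_num [NNReal.mk]; rfl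
  rw [h1, one_mul, mul_zero] at h
  have h2 : (fun x : ℝ => -x) = (fun x : ℝ => -1 * x) := by funext x; ring
  rw [h2]
  exact h

lemma cg_rot : complexGaussian.map (fun z => Complex.I * z) = complexGaussian := by
  have hme : Measurable (⇑Complex.measurableEquivRealProd.symm) :=
    Complex.measurableEquivRealProd.symm.measurable
  have hTI : Measurable (fun z : ℂ => Complex.I * z) := measurable_const_mul _
  have hS : Measurable (fun p : ℝ × ℝ => (-p.2, p.1)) := by fun_prop
  rw [cg_eq, Measure.map_map hTI hme]
  have hcomp : (fun z : ℂ => Complex.I * z) ∘ ⇑Complex.measurableEquivRealProd.symm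
      = ⇑Complex.measurableEquivRealProd.symm ∘ (fun p : ℝ × ℝ => (-p.2, p.1)) := by
    funext p
    simp [Function.comp, Complex.mk_eq_add_mul_I, Complex.ext_iff]
  rw [hcomp, ← Measure.map_map hme hS]
  congr 1
  have h2 : (fun p : ℝ × ℝ => (-p.2, p.1))
      = (Prod.map (fun x : ℝ => -x) (id : ℝ → ℝ)) ∘ Prod.swap := rfl
  rw [h2, ← Measure.map_map (Measurable.prodMap measurable_neg measurable_id) measurable_swap,
    Measure.prod_swap, ← Measure.map_prod_map _ _ measurable_neg measurable_id,
    gmap_neg, Measure.map_id]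

lemma ipow (i j : ℕ) : Integrable (fun p : ℝ × ℝ => p.1 ^ i * p.2 ^ j) prodG :=
  (integrable_pow_gaussianHalf i).mul_prod (integrable_pow_gaussianHalf j)

lemma epow (i j : ℕ) : ∫ p : ℝ × ℝ, p.1 ^ i * p.2 ^ j ∂prodG
    = (∫ x, x ^ i ∂gHalf) * (∫ x, x ^ j ∂gHalf) :=
  integral_prod_mul (fun x => x ^ i) (fun y => y ^ j)

lemma cm_norm2 : ∫ z, Complex.normSq z ∂complexGaussian = 1 := by
  rw [integral_cg]
  have e : ∀ p : ℝ × ℝ, Complex.normSq (p.1 + p.2 * Complex.I)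
      = p.1 ^ 2 * p.2 ^ 0 + p.1 ^ 0 * p.2 ^ 2 := by
    intro p; simp [Complex.normSq_add_mul_I]
  simp_rw [e]
  rw [integral_add (ipow 2 0) (ipow 0 2), epow, epow, gmom0, gmom2]
  norm_num

lemma cm_norm4 : ∫ z, (Complex.normSq z) ^ 2 ∂complexGaussian = 2 := by
  rw [integral_cg]
  have e : ∀ p : ℝ × ℝ, (Complex.normSq (p.1 + p.2 * Complex.I)) ^ 2
      = p.1 ^ 4 * p.2 ^ 0 + (2 * (p.1 ^ 2 * p.2 ^ 2) + p.1 ^ 0 * p.2 ^ 4) := by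
    intro p; rw [Complex.normSq_add_mul_I]; ring
  simp_rw [e]
  have haux : Integrable (fun p : ℝ × ℝ => 2*(p.1^2*p.2^2) + p.1^0*p.2^4) prodG :=
    ((ipow 2 2).const_mul 2).add (ipow 0 4)
  have haux2 : Integrable (fun p : ℝ × ℝ => 2*(p.1^2*p.2^2)) prodG :=
    (ipow 2 2).const_mul 2
  rw [integral_add (ipow 4 0) haux,
    integral_add haux2 (ipow 0 4),
    integral_const_mul, epow, epow, epow, gmom0, gmom2, gmom4]
  norm_num

lemma integrable_normSq_pow (k : ℕ) :
    Integrable (fun z => (Complex.normSq z) ^ k) complexGaussian := by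
  rw [integrable_cg_iff]
  have e : ∀ p : ℝ × ℝ, (Complex.normSq (p.1 + p.2 * Complex.I)) ^ k
      = ∑ c ∈ Finset.range (k+1), (k.choose c : ℝ) * (p.1 ^ (2*c) * p.2 ^ (2*(k-c))) := by
    intro p
    rw [Complex.normSq_add_mul_I, add_pow]
    refine Finset.sum_congr rfl fun c hc => ?_
    rw [← pow_mul, ← pow_mul]
    ring
  simp_rw [e]
  exact integrable_finset_sum _ fun c _ => (ipow (2*c) (2*(k-c))).const_mul _

def cmF (a b : ℕ) : ℂ := ∫ z, z ^ a * (starRingEnd ℂ) z ^ b ∂complexGaussian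

lemma cmF00 : cmF 0 0 = 1 := by
  simp [cmF]

lemma cmF11 : cmF 1 1 = 1 := by
  rw [cmF]
  simp_rw [pow_one, Complex.mul_conj]
  rw [show (∫ z, ((Complex.normSq z : ℝ) : ℂ) ∂complexGaussian)
      = (((∫ z, Complex.normSq z ∂complexGaussian) : ℝ) : ℂ) from integral_ofReal,
    cm_norm2, Complex.ofReal_one]

lemma cmF22 : cmF 2 2 = 2 := by
  rw [cmF]
  have e : ∀ z : ℂ, z ^ 2 * (starRingEnd ℂ) z ^ 2 = ((Complex.normSq z : ℝ) ^ 2 : ℝ) := by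
    intro z
    rw [← mul_pow, Complex.mul_conj, Complex.ofReal_pow]
  simp_rw [e]
  rw [show (∫ z, ((Complex.normSq z ^ 2 : ℝ) : ℂ) ∂complexGaussian)
      = (((∫ z, Complex.normSq z ^ 2 ∂complexGaussian) : ℝ) : ℂ) from integral_ofReal,
    cm_norm4]
  norm_num

lemma cont_mono (a b : ℕ) : Continuous fun z : ℂ => z ^ a * (starRingEnd ℂ) z ^ b :=
  (continuous_pow a).mul (Complex.continuous_conj.pow b)

lemma integrable_cmF (a b : ℕ) (h : a + b ≤ 4) :
    Integrable (fun z : ℂ => z ^ a * (starRingEnd ℂ) z ^ b) complexGaussian := by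
  refine Integrable.mono'
    (g := fun z : ℂ => (Complex.normSq z) ^ 0 + 2 * (Complex.normSq z) ^ 1
      + (Complex.normSq z) ^ 2)
    (((integrable_normSq_pow 0).add ((integrable_normSq_pow 1).const_mul 2)).add
      (integrable_normSq_pow 2))
    (cont_mono a b).aestronglyMeasurable ?_
  filter_upwards with z
  have ht : (0:ℝ) ≤ ‖z‖ := norm_nonneg z
  have hsq : Complex.normSq z = ‖z‖ ^ 2 := by
    rw [Complex.normSq_eq_norm_sq]
  rw [norm_mul, norm_pow, norm_pow, RCLike.norm_conj, ← pow_add, hsq]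
  rcases le_or_gt ‖z‖ 1 with h1 | h1
  · have := pow_le_one₀ (n := a+b) ht h1
    nlinarith [pow_nonneg ht (a+b)]
  · have h4 : ‖z‖ ^ (a+b) ≤ ‖z‖ ^ 4 := pow_le_pow_right₀ h1.le h
    nlinarith [pow_nonneg ht 2]

lemma cmF_zero (a b : ℕ) (hne : Complex.I ^ a * (-Complex.I) ^ b ≠ 1) : cmF a b = 0 := by
  have hcont := cont_mono a b
  have h1 : cmF a b
      = ∫ z, (Complex.I * z) ^ a * (starRingEnd ℂ) (Complex.I * z) ^ b ∂complexGaussian := by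
    rw [cmF]
    conv_lhs => rw [← cg_rot]
    rw [integral_map (measurable_const_mul _).aemeasurable hcont.aestronglyMeasurable]
  have h2 : ∀ z : ℂ, (Complex.I * z) ^ a * (starRingEnd ℂ) (Complex.I * z) ^ b
      = (Complex.I ^ a * (-Complex.I) ^ b) * (z ^ a * (starRingEnd ℂ) z ^ b) := by
    intro z
    rw [mul_pow, RingHom.map_mul, Complex.conj_I, mul_pow]
    ring
  simp_rw [h2] at h1
  rw [integral_const_mul, ← cmF] at h1
  have h3 : (1 - Complex.I ^ a * (-Complex.I) ^ b) * cmF a b = 0 := by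
    linear_combination h1
  rcases mul_eq_zero.mp h3 with h4 | h4
  · exact absurd (by linear_combination -h4) hne
  · exact h4

lemma cmF10 : cmF 1 0 = 0 := cmF_zero 1 0 (by
  simp only [pow_one, pow_zero, mul_one]
  simp [Complex.ext_iff])
lemma cmF01 : cmF 0 1 = 0 := cmF_zero 0 1 (by
  simp only [pow_one, pow_zero, one_mul]
  simp [Complex.ext_iff])
lemma cmF20 : cmF 2 0 = 0 := cmF_zero 2 0 (by
  simp only [pow_zero, mul_one, Complex.I_sq]
  norm_num)
lemma cmF02 : cmF 0 2 = 0 := cmF_zero 0 2 (by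
  simp only [pow_zero, one_mul, neg_sq, Complex.I_sq]
  norm_num)
lemma cmF21 : cmF 2 1 = 0 := cmF_zero 2 1 (by
  simp only [pow_one, Complex.I_sq]
  simp [Complex.ext_iff])
lemma cmF12 : cmF 1 2 = 0 := cmF_zero 1 2 (by
  simp only [pow_one, neg_sq, Complex.I_sq]
  simp [Complex.ext_iff])


section PiLayer

variable {n : ℕ}

def cgMS : MeasureSpace ℂ := ⟨complexGaussian⟩

lemma integral_stdCG_prod (f : Fin n → ℂ → ℂ) :
    ∫ a, (∏ i, f i (a i)) ∂stdCGaussian n = ∏ i, ∫ z, f i z ∂complexGaussian := by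
  rw [stdCGaussian, ← MeasurableEquiv.coe_toLp, integral_map_equiv]
  exact integral_fintype_prod_eq_prod (μ := fun _ => complexGaussian) f

lemma integrable_stdCG_prod (f : Fin n → ℂ → ℂ)
    (hf : ∀ i, Integrable (f i) complexGaussian) :
    Integrable (fun a : EuclideanSpace ℂ (Fin n) => ∏ i, f i (a i)) (stdCGaussian n) := by
  rw [stdCGaussian, ← MeasurableEquiv.coe_toLp, integrable_map_equiv]
  exact Integrable.fintype_prod (μ := fun _ => complexGaussian) hf

lemma prod_pow_single (a : Fin n → ℂ) (t : Fin n) :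
    ∏ i, (a i) ^ (if i = t then 1 else 0) = a t := by
  simp_rw [pow_ite, pow_one, pow_zero]
  rw [Finset.prod_ite_eq' Finset.univ t a]
  simp

lemma monomial_eq (p q j k : Fin n) (a : Fin n → ℂ) :
    a p * (starRingEnd ℂ) (a q) * (a j * (starRingEnd ℂ) (a k)) =
      ∏ i, ((a i) ^ ((if i = p then 1 else 0) + (if i = j then 1 else 0)) *
        ((starRingEnd ℂ) (a i)) ^ ((if i = q then 1 else 0) + (if i = k then 1 else 0))) := by
  rw [Finset.prod_mul_distrib]
  simp_rw [pow_add]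
  rw [Finset.prod_mul_distrib, Finset.prod_mul_distrib,
    prod_pow_single a p, prod_pow_single a j,
    prod_pow_single (fun i => (starRingEnd ℂ) (a i)) q,
    prod_pow_single (fun i => (starRingEnd ℂ) (a i)) k]
  ring

/-- evaluation of products of complex Gaussian moments -/
lemma prod_cmF_eval (p q j k : Fin n) :
    (∏ i, cmF ((if i = p then 1 else 0) + (if i = j then 1 else 0))
      ((if i = q then 1 else 0) + (if i = k then 1 else 0)))
    = (if p = q then 1 else 0) * (if j = k then 1 else 0)
      + (if p = k then 1 else 0) * (if q = j then 1 else 0) := by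
  by_cases hA : p = q ∧ j = k
  · obtain ⟨hpq, hjk⟩ := hA
    subst hpq; subst hjk
    by_cases hpj : p = j
    · subst hpj
      have h1 : ∀ i : Fin n, cmF ((if i = p then 1 else 0) + (if i = p then 1 else 0))
          ((if i = p then 1 else 0) + (if i = p then 1 else 0)) = if i = p then 2 else 1 := by
        intro i
        by_cases h : i = p <;> simp [h, cmF22, cmF00]
      rw [Finset.prod_congr rfl (fun i _ => h1 i), Finset.prod_ite_eq' Finset.univ p (fun _ => 2)]
      simp
      norm_num
    · have hjp : ¬ j = p := fun hh => hpj hh.symm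
      have h1 : ∀ i : Fin n, cmF ((if i = p then 1 else 0) + (if i = j then 1 else 0))
          ((if i = p then 1 else 0) + (if i = j then 1 else 0)) = 1 := by
        intro i
        by_cases h : i = p <;> by_cases h' : i = j
        · exact absurd (h.symm.trans h') hpj
        all_goals simp [h, h', hpj, hjp, cmF11, cmF00]
      rw [Finset.prod_congr rfl (fun i _ => h1 i), Finset.prod_const_one]
      have hpk : ¬ p = j := hpj
      simp [hpj, fun h : p = j => hpj h]
  · by_cases hB : p = k ∧ q = j
    · obtain ⟨hpk, hqj⟩ := hB
      subst hpk; subst hqj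
      have hpq : ¬ p = q := by
        intro h
        exact hA ⟨h, h.symm⟩
      have hqp : ¬ q = p := fun hh => hpq hh.symm
      have h1 : ∀ i : Fin n, cmF ((if i = p then 1 else 0) + (if i = q then 1 else 0))
          ((if i = q then 1 else 0) + (if i = p then 1 else 0)) = 1 := by
        intro i
        by_cases h : i = p <;> by_cases h' : i = q
        · exact absurd (h.symm.trans h') hpq
        all_goals simp [h, h', hpq, hqp, cmF11, cmF00]
      rw [Finset.prod_congr rfl (fun i _ => h1 i), Finset.prod_const_one]
      simp [hpq]
    · -- product is zero
      have hrhs : ((if p = q then (1:ℂ) else 0) * (if j = k then 1 else 0)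
          + (if p = k then 1 else 0) * (if q = j then 1 else 0)) = 0 := by
        rcases not_and_or.mp hA with h | h <;> rcases not_and_or.mp hB with h' | h' <;>
          simp [h, h']
      rw [hrhs]
      by_cases hpq : p = q
      · subst hpq
        by_cases hjp : j = p
        · subst hjp
          have hjk : ¬ (j : Fin n) = k := fun h => hA ⟨rfl, h⟩
          refine Finset.prod_eq_zero (Finset.mem_univ k) ?_
          have hkj : ¬ k = j := fun h => hjk h.symm
          simp [hkj, cmF01]
        · have hjk : ¬ j = k := fun h => hA ⟨rfl, h⟩
          refine Finset.prod_eq_zero (Finset.mem_univ j) ?_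
          simp [hjp, hjk, cmF10]
      · by_cases hpk : p = k
        · subst hpk
          have hqj : ¬ q = j := fun h => hB ⟨rfl, h⟩
          have hqp : ¬ q = p := fun h => hpq h.symm
          refine Finset.prod_eq_zero (Finset.mem_univ q) ?_
          simp [hqp, hqj, cmF01]
        · by_cases hpj : p = j
          · subst hpj
            refine Finset.prod_eq_zero (Finset.mem_univ p) ?_
            simp [hpq, hpk, cmF20]
          · refine Finset.prod_eq_zero (Finset.mem_univ p) ?_
            simp [hpq, hpk, hpj, cmF10]

lemma M_eq (p q j k : Fin n) :
    (∫ a : EuclideanSpace ℂ (Fin n),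
        a p * (starRingEnd ℂ) (a q) * (a j * (starRingEnd ℂ) (a k)) ∂stdCGaussian n)
    = (if p = q then 1 else 0) * (if j = k then 1 else 0)
      + (if p = k then 1 else 0) * (if q = j then 1 else 0) := by
  have h1 : ∀ a : EuclideanSpace ℂ (Fin n),
      a p * (starRingEnd ℂ) (a q) * (a j * (starRingEnd ℂ) (a k)) =
      ∏ i, ((a i) ^ ((if i = p then 1 else 0) + (if i = j then 1 else 0)) *
        ((starRingEnd ℂ) (a i)) ^ ((if i = q then 1 else 0) + (if i = k then 1 else 0))) :=
    fun a => monomial_eq p q j k a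
  simp_rw [h1]
  rw [integral_stdCG_prod (fun i z => z ^ ((if i = p then 1 else 0) + (if i = j then 1 else 0)) *
    ((starRingEnd ℂ) z) ^ ((if i = q then 1 else 0) + (if i = k then 1 else 0)))]
  exact prod_cmF_eval p q j k

lemma integrable_quartic (p q j k : Fin n) :
    Integrable (fun a : EuclideanSpace ℂ (Fin n) =>
      a p * (starRingEnd ℂ) (a q) * (a j * (starRingEnd ℂ) (a k))) (stdCGaussian n) := by
  have h1 : ∀ a : EuclideanSpace ℂ (Fin n),
      a p * (starRingEnd ℂ) (a q) * (a j * (starRingEnd ℂ) (a k)) =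
      ∏ i, ((a i) ^ ((if i = p then 1 else 0) + (if i = j then 1 else 0)) *
        ((starRingEnd ℂ) (a i)) ^ ((if i = q then 1 else 0) + (if i = k then 1 else 0))) :=
    fun a => monomial_eq p q j k a
  simp_rw [h1]
  refine integrable_stdCG_prod _ (fun i => integrable_cmF _ _ ?_)
  have : (if i = p then 1 else 0) + (if i = j then 1 else 0) ≤ 2 := by split_ifs <;> norm_num
  have : (if i = q then 1 else 0) + (if i = k then 1 else 0) ≤ 2 := by split_ifs <;> norm_num
  omega

end PiLayer

section Final

variable {n : ℕ}

lemma inner_expand (y a : EuclideanSpace ℂ (Fin n)) :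
    ⟪a, y⟫_ℂ = ∑ i, (starRingEnd ℂ) (a i) * y i := by
  simp [PiLp.inner_apply, RCLike.inner_apply]
  exact Finset.sum_congr rfl fun i _ => mul_comm _ _

lemma normsq_inner_expand (y a : EuclideanSpace ℂ (Fin n)) :
    ((‖⟪a, y⟫_ℂ‖ ^ 2 : ℝ) : ℂ)
      = ∑ p, ∑ q, (y p * (starRingEnd ℂ) (y q)) * ((starRingEnd ℂ) (a p) * a q) := by
  have h1 : ((‖⟪a, y⟫_ℂ‖ ^ 2 : ℝ) : ℂ) = ⟪a, y⟫_ℂ * (starRingEnd ℂ) ⟪a, y⟫_ℂ := by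
    rw [Complex.mul_conj, Complex.normSq_eq_norm_sq]
  rw [h1, inner_expand, map_sum, Finset.sum_mul_sum]
  refine Finset.sum_congr rfl fun p _ => Finset.sum_congr rfl fun q _ => ?_
  simp only [_root_.map_mul, Complex.conj_conj]
  ring

lemma expand_key (y : EuclideanSpace ℂ (Fin n)) (j k : Fin n)
    (a : EuclideanSpace ℂ (Fin n)) :
    ((‖⟪a, y⟫_ℂ‖ ^ 2 : ℝ) : ℂ) * (a j * (starRingEnd ℂ) (a k))
    = ∑ p, ∑ q, (y p * (starRingEnd ℂ) (y q))
        * (a q * (starRingEnd ℂ) (a p) * (a j * (starRingEnd ℂ) (a k))) := by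
  rw [normsq_inner_expand, Finset.sum_mul]
  refine Finset.sum_congr rfl fun p _ => ?_
  rw [Finset.sum_mul]
  refine Finset.sum_congr rfl fun q _ => ?_
  ring

lemma integrable_key (y : EuclideanSpace ℂ (Fin n)) (j k : Fin n) :
    Integrable (fun a : EuclideanSpace ℂ (Fin n) =>
      ((‖⟪a, y⟫_ℂ‖ ^ 2 : ℝ) : ℂ) * (a j * (starRingEnd ℂ) (a k))) (stdCGaussian n) := by
  simp_rw [expand_key]
  exact integrable_finset_sum _ fun p _ => integrable_finset_sum _ fun q _ =>
    (integrable_quartic q p j k).const_mul _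

lemma key_integral (y : EuclideanSpace ℂ (Fin n)) (j k : Fin n) :
    (∫ a, ((‖⟪a, y⟫_ℂ‖ ^ 2 : ℝ) : ℂ) * (a j * (starRingEnd ℂ) (a k)) ∂stdCGaussian n)
    = (∑ p, y p * (starRingEnd ℂ) (y p)) * (if j = k then 1 else 0)
      + y j * (starRingEnd ℂ) (y k) := by
  simp_rw [expand_key]
  rw [integral_finset_sum _ (fun p _ => integrable_finset_sum _ fun q _ =>
    (integrable_quartic q p j k).const_mul _)]
  simp_rw [integral_finset_sum _ (fun q _ => (integrable_quartic q _ j k).const_mul _),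
    integral_const_mul, M_eq]
  by_cases hjk : j = k
  · subst hjk
    simp [mul_add, Finset.sum_add_distrib, mul_ite, ite_mul, Finset.sum_ite_eq',
      ← Finset.sum_mul]
  · simp [hjk, mul_add, Finset.sum_add_distrib, mul_ite, ite_mul, Finset.sum_ite_eq',
      ← Finset.sum_mul]

end Final


end SubExpAux

end Aux

/-- Correctness of the sub-exponential (SubExpPhase) initialization
in expectation. -/
theorem subexp_initialization_correctness
    (n : ℕ) (x0 x : EuclideanSpace ℂ (Fin n)) (hx0 : ‖x0‖ = 1) (hx : ‖x‖ = 1)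
    (C : Matrix (Fin n) (Fin n) ℂ)
    (hC : ∀ j k, C j k =
      ∫ a, ((‖⟪a, x0⟫_ℂ‖ ^ 2 : ℝ) : ℂ) * (a j * (starRingEnd ℂ) (a k)) ∂(stdCGaussian n)) :
    (∫ a, ‖⟪a, x0⟫_ℂ‖ ^ 2 * ‖⟪a, x⟫_ℂ‖ ^ 2 ∂(stdCGaussian n)) = ‖⟪x0, x⟫_ℂ‖ ^ 2 + 1 ∧
    qf C x = ‖⟪x0, x⟫_ℂ‖ ^ 2 + 1 ∧
    C = outerC x0 + 1 := by
  classical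
  set w := ⟪x0, x⟫_ℂ with hw
  have hsum1 : (∑ p, x0 p * (starRingEnd ℂ) (x0 p)) = 1 := by
    have h2 : ⟪x0, x0⟫_ℂ = 1 := by
      rw [inner_self_eq_norm_sq_to_K x0, hx0]
      norm_num
    calc ∑ p, x0 p * (starRingEnd ℂ) (x0 p) = ∑ p, (starRingEnd ℂ) (x0 p) * x0 p := by
          refine Finset.sum_congr rfl fun p _ => by ring
      _ = ⟪x0, x0⟫_ℂ := (SubExpAux.inner_expand x0 x0).symm
      _ = 1 := h2
  have hxx : (∑ j, (starRingEnd ℂ) (x j) * x j) = 1 := by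
    have h2 : ⟪x, x⟫_ℂ = 1 := by
      rw [inner_self_eq_norm_sq_to_K x, hx]
      norm_num
    rw [← SubExpAux.inner_expand x x]
    exact h2
  have hCval : C = outerC x0 + 1 := by
    ext j k
    rw [hC j k, SubExpAux.key_integral x0 j k, hsum1, one_mul]
    simp only [Matrix.add_apply, Matrix.one_apply, outerC]
    rw [add_comm]
  have hdot : star (fun j => x j) ⬝ᵥ C.mulVec (fun j => x j)
      = ∑ j, (starRingEnd ℂ) (x j) * (∑ k, C j k * x k) := by
    simp [Matrix.mulVec, dotProduct, Complex.star_def]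
  have hSSval : (∑ j, (starRingEnd ℂ) (x j) * (∑ k, C j k * x k))
      = (((‖w‖ ^ 2 + 1 : ℝ)) : ℂ) := by
    simp_rw [hCval, Matrix.add_apply, Matrix.one_apply, outerC]
    have hstep : (∑ j, (starRingEnd ℂ) (x j) * (∑ k, (x0 j * (starRingEnd ℂ) (x0 k)
          + if j = k then 1 else 0) * x k))
        = (∑ j, (starRingEnd ℂ) (x j) * x0 j) * (∑ k, (starRingEnd ℂ) (x0 k) * x k)
          + ∑ j, (starRingEnd ℂ) (x j) * x j := by
      simp only [add_mul, Finset.sum_add_distrib, ite_mul, one_mul, zero_mul,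
        Finset.sum_ite_eq, Finset.mem_univ, if_true, mul_add, Finset.mul_sum]
      congr 1
      rw [Finset.sum_comm]
      refine Finset.sum_congr rfl fun j _ => ?_
      rw [Finset.sum_mul]
      refine Finset.sum_congr rfl fun k _ => ?_
      ring
    rw [hstep, hxx, ← SubExpAux.inner_expand x0 x, ← SubExpAux.inner_expand x x0, ← hw,
      ← inner_conj_symm x x0, ← hw]
    rw [show (starRingEnd ℂ) w * w = ((‖w‖ ^ 2 : ℝ) : ℂ) by
      rw [mul_comm, Complex.mul_conj, Complex.normSq_eq_norm_sq]]
    push_cast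
    ring
  have hqf : qf C x = ‖w‖ ^ 2 + 1 := by
    rw [qf, hdot, hSSval, Complex.ofReal_re]
  have hre : ((∫ a, ‖⟪a, x0⟫_ℂ‖ ^ 2 * ‖⟪a, x⟫_ℂ‖ ^ 2 ∂stdCGaussian n : ℝ) : ℂ)
      = ∑ p, ∑ q, (x p * (starRingEnd ℂ) (x q)) * C q p := by
    rw [show ((∫ a, ‖⟪a, x0⟫_ℂ‖ ^ 2 * ‖⟪a, x⟫_ℂ‖ ^ 2 ∂stdCGaussian n : ℝ) : ℂ)
        = ∫ a, ((‖⟪a, x0⟫_ℂ‖ ^ 2 * ‖⟪a, x⟫_ℂ‖ ^ 2 : ℝ) : ℂ) ∂stdCGaussian n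
      from integral_ofReal.symm]
    have hexp : ∀ a : EuclideanSpace ℂ (Fin n),
        ((‖⟪a, x0⟫_ℂ‖ ^ 2 * ‖⟪a, x⟫_ℂ‖ ^ 2 : ℝ) : ℂ)
        = ∑ p, ∑ q, (x p * (starRingEnd ℂ) (x q))
            * (((‖⟪a, x0⟫_ℂ‖ ^ 2 : ℝ) : ℂ) * (a q * (starRingEnd ℂ) (a p))) := by
      intro a
      rw [Complex.ofReal_mul, SubExpAux.normsq_inner_expand x a, Finset.mul_sum]
      refine Finset.sum_congr rfl fun p _ => ?_
      rw [Finset.mul_sum]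
      refine Finset.sum_congr rfl fun q _ => ?_
      ring
    simp_rw [hexp]
    rw [integral_finset_sum _ (fun p _ => integrable_finset_sum _ fun q _ =>
      (SubExpAux.integrable_key x0 q p).const_mul _)]
    refine Finset.sum_congr rfl fun p _ => ?_
    rw [integral_finset_sum _ (fun q _ => (SubExpAux.integrable_key x0 q p).const_mul _)]
    refine Finset.sum_congr rfl fun q _ => ?_
    rw [integral_const_mul, ← hC q p]
  have hswap : (∑ p, ∑ q, (x p * (starRingEnd ℂ) (x q)) * C q p)
      = ∑ j, (starRingEnd ℂ) (x j) * (∑ k, C j k * x k) := by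
    rw [Finset.sum_comm]
    refine Finset.sum_congr rfl fun j _ => ?_
    rw [Finset.mul_sum]
    refine Finset.sum_congr rfl fun k _ => ?_
    ring
  have hint : (∫ a, ‖⟪a, x0⟫_ℂ‖ ^ 2 * ‖⟪a, x⟫_ℂ‖ ^ 2 ∂stdCGaussian n) = ‖w‖ ^ 2 + 1 := by
    have h := hre.trans (hswap.trans hSSval)
    exact_mod_cast h
  exact ⟨hint, hqf, hCval⟩
end
end
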